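/- Let 𝒳 = {X ∈ 𝕊^{m+1} : diag(X) = e, X ⪰ 0} and M = [I, -e] ∈ ℝ^{m×(m+1)}. Then the image M 𝒳 Mᵀ equals {Y ∈ 𝕊^m : Y ⪰ (1/4) d dᵀ where d = diag(Y)} (without the trace constraint; with the additional constraint Tr(M X Mᵀ)=1 on 𝒳 it equals {Y ∈ 𝕊^m : Tr(Y)=1, Y ⪰ (1/4) diag(Y) diag(Y)ᵀ}). -/

import Mathlib

open Matrix

section StmtAux
variable {m : ℕ}

private lemma entryMXM_aux (M : Matrix (Fin m) (Fin m ⊕ Fin 1) ℝ)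
    (hM : M = fromCols 1 (-(replicateCol (Fin 1) (fun _ => 1))))
    (X : Matrix (Fin m ⊕ Fin 1) (Fin m ⊕ Fin 1) ℝ) (i j : Fin m) :
    (M * X * Mᵀ) i j =
    X (.inl i) (.inl j) - X (.inl i) (.inr 0) - X (.inr 0) (.inl j) + X (.inr 0) (.inr 0) := by
  subst hM
  simp [Matrix.mul_apply, Fintype.sum_sum_type, fromCols_apply_inl, fromCols_apply_inr,
    Matrix.one_apply, Finset.sum_ite_eq, Finset.mul_sum, Finset.sum_mul, sub_mul, mul_sub]
  ring

private lemma vmv_psd_aux {n : Type*} [Fintype n] [DecidableEq n] (v : n → ℝ) :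
    (vecMulVec v v).PosSemidef := by
  rw [vecMulVec_eq (Fin 1)]
  convert posSemidef_self_mul_conjTranspose (replicateCol (Fin 1) v) using 1
  simp
  rfl

private lemma fwd_aux (M : Matrix (Fin m) (Fin m ⊕ Fin 1) ℝ)
    (hM : M = fromCols 1 (-(replicateCol (Fin 1) (fun _ => 1))))
    (X : Matrix (Fin m ⊕ Fin 1) (Fin m ⊕ Fin 1) ℝ)
    (hX1 : Xᵀ = X) (hX2 : ∀ i, X i i = 1) (hX3 : X.PosSemidef) :
    (M * X * Mᵀ)ᵀ = M * X * Mᵀ ∧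
      ((M * X * Mᵀ) - (1 / 4 : ℝ) • vecMulVec (M * X * Mᵀ).diag (M * X * Mᵀ).diag).PosSemidef := by
  have hsym : ∀ j, X (.inr 0) (.inl j) = X (.inl j) (.inr 0) := fun j => by
    have := congrFun (congrFun hX1 (.inl j)) (.inr 0)
    simpa [transpose_apply] using this
  constructor
  · rw [transpose_mul, transpose_mul, transpose_transpose, hX1]
    exact (Matrix.mul_assoc M X Mᵀ).symm
  · set x : Fin m → ℝ := fun i => X (.inl i) (.inr 0) with hx
    set N : Matrix (Fin m ⊕ Fin 1) (Fin m) ℝ :=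
      Matrix.of (fun a j => Sum.elim (fun k => if k = j then (1:ℝ) else 0) (fun _ => -(x j)) a)
      with hN
    have key : (M * X * Mᵀ) - (1 / 4 : ℝ) • vecMulVec (M * X * Mᵀ).diag (M * X * Mᵀ).diag
        = Nᴴ * X * N := by
      ext i j
      have e1 := entryMXM_aux M hM X i j
      have e2 := entryMXM_aux M hM X i i
      have e3 := entryMXM_aux M hM X j j
      simp only [Matrix.sub_apply, Matrix.smul_apply, vecMulVec_apply, diag_apply, smul_eq_mul, e1, e2, e3]
      simp only [Matrix.mul_apply, Fintype.sum_sum_type, conjTranspose_apply, hN, Matrix.of_apply,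
        Sum.elim_inl, Sum.elim_inr, star_trivial, Finset.univ_unique, Finset.sum_singleton,
        ite_mul, one_mul, zero_mul, Finset.sum_ite_eq, Finset.mem_univ, if_true, mul_ite, mul_one,
        mul_zero, Finset.sum_ite_eq', mul_neg, neg_mul]
      simp only [show (default : Fin 1) = 0 from rfl]
      rw [hsym i, hsym j, hX2 (.inl i), hX2 (.inl j), hX2 (.inr 0)]
      ring
    rw [key]
    exact hX3.conjTranspose_mul_mul_same N

private lemma bwd_aux (M : Matrix (Fin m) (Fin m ⊕ Fin 1) ℝ)
    (hM : M = fromCols 1 (-(replicateCol (Fin 1) (fun _ => 1))))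
    (Y : Matrix (Fin m) (Fin m) ℝ)
    (hZ : (Y - (1 / 4 : ℝ) • vecMulVec Y.diag Y.diag).PosSemidef) :
    ∃ X : Matrix (Fin m ⊕ Fin 1) (Fin m ⊕ Fin 1) ℝ,
      (Xᵀ = X ∧ (∀ i, X i i = 1) ∧ X.PosSemidef) ∧ M * X * Mᵀ = Y := by
  set Z := Y - (1 / 4 : ℝ) • vecMulVec Y.diag Y.diag with hZdef
  have hZe : ∀ i j, Z i j = Y i j - 1 / 4 * (Y i i * Y j j) := fun i j => by
    simp [hZdef, vecMulVec_apply, diag_apply]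
  have hZs : ∀ i j, Z j i = Z i j := fun i j => by
    have := congrFun (congrFun hZ.1 i) j
    simpa [conjTranspose_apply] using this
  set x : Fin m → ℝ := fun i => 1 - Y i i / 2 with hx
  set w : Fin m ⊕ Fin 1 → ℝ := Sum.elim x (fun _ => 1) with hw
  set B : Matrix (Fin m ⊕ Fin 1) (Fin m ⊕ Fin 1) ℝ :=
    Matrix.of (fun a b =>
      Sum.elim (fun i => Sum.elim (fun j => Z i j) (fun _ => 0) b) (fun _ => 0) a) with hB
  refine ⟨B + vecMulVec w w, ⟨?_, ?_, ?_⟩, ?_⟩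
  · ext a b
    cases a <;> cases b <;>
      simp [hB, hw, vecMulVec_apply, transpose_apply, mul_comm]
    exact hZs _ _
  · intro a
    cases a with
    | inl i =>
      simp [hB, hw, vecMulVec_apply, hZe, hx]
      ring
    | inr u => simp [hB, hw, vecMulVec_apply]
  · apply Matrix.PosSemidef.add _ (vmv_psd_aux w)
    have hBE : B = (fromCols (1 : Matrix (Fin m) (Fin m) ℝ) 0)ᴴ * Z *
        (fromCols (1 : Matrix (Fin m) (Fin m) ℝ) 0) := by
      ext a b
      cases a <;> cases b <;>
        simp [hB, Matrix.mul_apply, Fintype.sum_sum_type, fromCols_apply_inl,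
          fromCols_apply_inr, conjTranspose_apply, Matrix.one_apply,
          Finset.sum_ite_eq, Finset.mul_sum, Finset.sum_mul]
    rw [hBE]
    exact hZ.conjTranspose_mul_mul_same _
  · ext i j
    rw [entryMXM_aux M hM]
    simp [hB, hw, vecMulVec_apply, hZe, hx]
    ring

end StmtAux

/-- with `𝒳 = {X ∈ 𝕊^{m+1} : diag(X) = e, X ⪰ 0}` and `M = [I, -e]`,
the image `M 𝒳 Mᵀ` equals `{Y ∈ 𝕊^m : Y ⪰ (1/4) d dᵀ, d = diag Y}`; adding the
constraint `Tr(M X Mᵀ) = 1` the image equals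
`{Y ∈ 𝕊^m : Tr Y = 1, Y ⪰ (1/4) diag(Y) diag(Y)ᵀ}`. -/
theorem stmt3 (m : ℕ) (M : Matrix (Fin m) (Fin m ⊕ Fin 1) ℝ)
    (hM : M = fromCols 1 (-(replicateCol (Fin 1) (fun _ => 1))))
    (𝒳 : Set (Matrix (Fin m ⊕ Fin 1) (Fin m ⊕ Fin 1) ℝ))
    (h𝒳 : 𝒳 = {X | Xᵀ = X ∧ (∀ i, X i i = 1) ∧ X.PosSemidef}) :
    ((fun X => M * X * Mᵀ) '' 𝒳 =
      {Y | Yᵀ = Y ∧ (Y - (1 / 4 : ℝ) • vecMulVec Y.diag Y.diag).PosSemidef}) ∧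
    ((fun X => M * X * Mᵀ) '' {X ∈ 𝒳 | Matrix.trace (M * X * Mᵀ) = 1} =
      {Y | Yᵀ = Y ∧ Matrix.trace Y = 1 ∧
        (Y - (1 / 4 : ℝ) • vecMulVec Y.diag Y.diag).PosSemidef}) := by
  have h1 : (fun X => M * X * Mᵀ) '' 𝒳 =
      {Y | Yᵀ = Y ∧ (Y - (1 / 4 : ℝ) • vecMulVec Y.diag Y.diag).PosSemidef} := by
    ext Y
    constructor
    · rintro ⟨X, hX, rfl⟩
      rw [h𝒳] at hX
      exact fwd_aux M hM X hX.1 hX.2.1 hX.2.2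
    · rintro ⟨hY1, hZ⟩
      obtain ⟨X, hX, hXY⟩ := bwd_aux M hM Y hZ
      exact ⟨X, h𝒳 ▸ hX, hXY⟩
  refine ⟨h1, ?_⟩
  ext Y
  constructor
  · rintro ⟨X, ⟨hX, htr⟩, rfl⟩
    have hmem : M * X * Mᵀ ∈ (fun X => M * X * Mᵀ) '' 𝒳 := ⟨X, hX, rfl⟩
    rw [h1] at hmem
    exact ⟨hmem.1, htr, hmem.2⟩
  · rintro ⟨hY1, htr, hZ⟩
    have hmem : Y ∈ (fun X => M * X * Mᵀ) '' 𝒳 := by rw [h1]; exact ⟨hY1, hZ⟩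
    obtain ⟨X, hX, hXY⟩ := hmem
    exact ⟨X, ⟨hX, by rw [show M * X * Mᵀ = Y from hXY]; exact htr⟩, hXY⟩
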